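/- Let F be a real normed space, β₀ ≥ 0, and r : ℕ → F a sequence. For l ≥ 1 set β_l = β₀·min( ‖r₀‖·(log 2)² / (‖r_l‖·l²·log(l+1)) , 1 ), and define z_k = −∑_{l=1}^{k} β_l · r_l. Then for every k ≥ 0, ‖z_k‖ ≤ (π²/6)·β₀·‖r₀‖. -/

import Mathlib

open scoped NNReal

/-- Boundedness of the dual iterates of ManIAL: with the dual step sizes
`β_l = β₀ min(‖r₀‖ (log 2)² / (‖r_l‖ l² log(l+1)), 1)` and `z_k = -∑_{l=1}^k β_l r_l`,
one has `‖z_k‖ ≤ (π²/6) β₀ ‖r₀‖` for every `k`. -/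
theorem dual_iterates_bounded
    {F : Type*} [NormedAddCommGroup F] [NormedSpace ℝ F]
    (β₀ : ℝ) (hβ₀ : 0 ≤ β₀) (r : ℕ → F) :
    ∀ k : ℕ,
      ‖-(∑ l ∈ Finset.Icc 1 k,
          (β₀ * min (‖r 0‖ * Real.log 2 ^ 2 /
              (‖r l‖ * (l : ℝ) ^ 2 * Real.log ((l : ℝ) + 1))) 1) • r l)‖
        ≤ Real.pi ^ 2 / 6 * β₀ * ‖r 0‖ := by
  intro k
  rw [norm_neg]
  calc ‖∑ l ∈ Finset.Icc 1 k,
          (β₀ * min (‖r 0‖ * Real.log 2 ^ 2 /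
              (‖r l‖ * (l : ℝ) ^ 2 * Real.log ((l : ℝ) + 1))) 1) • r l‖
      ≤ ∑ l ∈ Finset.Icc 1 k, β₀ * ‖r 0‖ * (1 / (l : ℝ) ^ 2) := by
        refine norm_sum_le_of_le _ ?_
        intro l hl
        have hl1 : 1 ≤ l := (Finset.mem_Icc.mp hl).1
        have hl1' : (1 : ℝ) ≤ (l : ℝ) := by exact_mod_cast hl1
        have hlsq : (0 : ℝ) < (l : ℝ) ^ 2 := by positivity
        have hlog : Real.log 2 ≤ Real.log ((l : ℝ) + 1) := by
          apply Real.log_le_log (by norm_num)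
          linarith
        have hlog2 : (0 : ℝ) < Real.log 2 := Real.log_pos (by norm_num)
        have hlogpos : (0 : ℝ) < Real.log ((l : ℝ) + 1) := lt_of_lt_of_le hlog2 hlog
        rw [norm_smul]
        rcases eq_or_lt_of_le (norm_nonneg (r l)) with h0 | h0
        · rw [← h0, mul_zero]
          positivity
        · have key : min (‖r 0‖ * Real.log 2 ^ 2 /
              (‖r l‖ * (l : ℝ) ^ 2 * Real.log ((l : ℝ) + 1))) 1 * ‖r l‖
              ≤ ‖r 0‖ * (1 / (l : ℝ) ^ 2) := by
            have h1 : min (‖r 0‖ * Real.log 2 ^ 2 /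
                (‖r l‖ * (l : ℝ) ^ 2 * Real.log ((l : ℝ) + 1))) 1 * ‖r l‖
                ≤ ‖r 0‖ * Real.log 2 ^ 2 /
                  (‖r l‖ * (l : ℝ) ^ 2 * Real.log ((l : ℝ) + 1)) * ‖r l‖ :=
              mul_le_mul_of_nonneg_right (min_le_left _ _) (norm_nonneg _)
            have h2 : ‖r 0‖ * Real.log 2 ^ 2 /
                  (‖r l‖ * (l : ℝ) ^ 2 * Real.log ((l : ℝ) + 1)) * ‖r l‖
                = ‖r 0‖ * (Real.log 2 ^ 2 / Real.log ((l : ℝ) + 1)) * (1 / (l : ℝ) ^ 2) := by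
              field_simp
            have h3 : Real.log 2 ^ 2 / Real.log ((l : ℝ) + 1) ≤ 1 := by
              rw [div_le_one hlogpos]
              calc Real.log 2 ^ 2 = Real.log 2 * Real.log 2 := sq (Real.log 2)
              _ ≤ 1 * Real.log ((l:ℝ)+1) := by
                  apply mul_le_mul _ hlog hlog2.le (by norm_num)
                  calc Real.log 2 ≤ Real.log (Real.exp 1) := by
                        apply Real.log_le_log (by norm_num)
                        have := Real.exp_one_gt_d9
                        linarith
                  _ = 1 := Real.log_exp 1
              _ = Real.log ((l:ℝ)+1) := one_mul _
            calc min _ 1 * ‖r l‖ ≤ _ := h1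
            _ = ‖r 0‖ * (Real.log 2 ^ 2 / Real.log ((l : ℝ) + 1)) * (1 / (l : ℝ) ^ 2) := h2
            _ ≤ ‖r 0‖ * 1 * (1 / (l : ℝ) ^ 2) := by
                apply mul_le_mul_of_nonneg_right _ (by positivity)
                exact mul_le_mul_of_nonneg_left h3 (norm_nonneg _)
            _ = ‖r 0‖ * (1 / (l : ℝ) ^ 2) := by ring
          have habs : |β₀ * min (‖r 0‖ * Real.log 2 ^ 2 /
              (‖r l‖ * (l : ℝ) ^ 2 * Real.log ((l : ℝ) + 1))) 1|
              = β₀ * min (‖r 0‖ * Real.log 2 ^ 2 /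
              (‖r l‖ * (l : ℝ) ^ 2 * Real.log ((l : ℝ) + 1))) 1 := by
            apply abs_of_nonneg
            apply mul_nonneg hβ₀
            apply le_min _ zero_le_one
            positivity
          rw [Real.norm_eq_abs, habs]
          calc β₀ * min _ 1 * ‖r l‖ = β₀ * (min _ 1 * ‖r l‖) := by ring
          _ ≤ β₀ * (‖r 0‖ * (1 / (l : ℝ) ^ 2)) := mul_le_mul_of_nonneg_left key hβ₀
          _ = β₀ * ‖r 0‖ * (1 / (l : ℝ) ^ 2) := by ring
    _ = β₀ * ‖r 0‖ * ∑ l ∈ Finset.Icc 1 k, (1 / (l : ℝ) ^ 2) := by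
        rw [Finset.mul_sum]
    _ ≤ β₀ * ‖r 0‖ * (Real.pi ^ 2 / 6) := by
        apply mul_le_mul_of_nonneg_left _ (by positivity)
        exact sum_le_hasSum _ (fun i _ => by positivity) hasSum_zeta_two
    _ = Real.pi ^ 2 / 6 * β₀ * ‖r 0‖ := by ring
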